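/- The sum Σ_{p≥0} Z(p+1)·12^{-p} equals (3-√3)/6, and the sum Σ_{p≥0} p·Z(p+1)·12^{-p} equals √3/6. -/

import Mathlib

/-- `Z(1) = (2-√3)/4` and `Z(p) = 6^p·(2p-5)!!/(8√3·p!)` for `p ≥ 2`. -/
noncomputable def Zfun : ℕ → ℝ := fun p =>
  if p = 1 then (2 - Real.sqrt 3) / 4
  else 6 ^ p * Nat.doubleFactorial (2 * p - 5) / (8 * Real.sqrt 3 * Nat.factorial p)

lemma dfact_step (p : ℕ) :
    Nat.doubleFactorial (2*(p+1)-1) = (2*p+1) * Nat.doubleFactorial (2*p-1) := by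
  rcases p with _ | q
  · decide
  · have h1 : 2*(q+1+1)-1 = (2*q+1)+2 := by omega
    have h2 : 2*(q+1)-1 = 2*q+1 := by omega
    rw [h1, h2, Nat.doubleFactorial_add_two]; ring_nf

lemma dfact_le (n : ℕ) : Nat.doubleFactorial (2*n-1) ≤ 2^n * n.factorial := by
  induction n with
  | zero => decide
  | succ k ih =>
    rw [dfact_step]
    calc (2*k+1) * Nat.doubleFactorial (2*k-1) ≤ (2*(k+1)) * (2^k * k.factorial) := by
          exact Nat.mul_le_mul (by omega) ih
      _ = 2^(k+1) * (k+1).factorial := by rw [Nat.factorial_succ]; ring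

noncomputable def Gf (n : ℕ) : ℝ :=
  (Nat.doubleFactorial (2*n-1) : ℝ) / (3 * 2^n * (n+1).factorial)

noncomputable def Uf (n : ℕ) : ℝ :=
  (Nat.doubleFactorial (2*n-1) : ℝ) * (3*n+2) / (3 * 2^n * (n+1).factorial)


lemma key1 (p : ℕ) :
    Zfun (p+2) / 12^(p+1) = Real.sqrt 3 / 4 * (Gf p - Gf (p+1)) := by
  have hs : Real.sqrt 3 * Real.sqrt 3 = 3 := Real.mul_self_sqrt (by norm_num)
  have hs0 : Real.sqrt 3 ≠ 0 := by positivity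
  have hidx : 2*(p+2)-5 = 2*p-1 := by omega
  have hstep : (Nat.doubleFactorial (2*(p+1)-1) : ℝ)
      = (2*p+1) * (Nat.doubleFactorial (2*p-1) : ℝ) := by
    rw [dfact_step]; push_cast; ring
  have hfac : ((p+2).factorial : ℝ) = (p+2) * (p+1) * (p.factorial : ℝ) := by
    rw [Nat.factorial_succ, Nat.factorial_succ]; push_cast; ring
  have hfac1 : ((p+1).factorial : ℝ) = (p+1) * (p.factorial : ℝ) := by
    rw [Nat.factorial_succ]; push_cast; ring
  have h12 : (12:ℝ)^p = 6^p * 2^p := by rw [← mul_pow]; norm_num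
  have hf0 : (p.factorial : ℝ) ≠ 0 := Nat.cast_ne_zero.mpr p.factorial_ne_zero
  have h2 : (2:ℝ)^p ≠ 0 := by positivity
  have h6 : (6:ℝ)^p ≠ 0 := by positivity
  have hp1 : ((p:ℝ)+1) ≠ 0 := by positivity
  have hp2 : ((p:ℝ)+2) ≠ 0 := by positivity
  have hdiv : ∀ a b : ℝ, b ≠ 0 →
      a / (8 * Real.sqrt 3 * b) = Real.sqrt 3 * a / (24 * b) := by
    intro a b hb
    rw [div_eq_div_iff (by positivity) (by positivity)]
    linear_combination (-8*a*b) * hs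
  unfold Zfun Gf
  rw [if_neg (by omega), hidx]
  rw [show p+1+1 = p+2 from rfl] at *
  rw [hdiv _ _ (Nat.cast_ne_zero.mpr (p+2).factorial_ne_zero)]
  rw [hstep, hfac, hfac1]
  field_simp
  rw [pow_succ, pow_succ, pow_succ, pow_succ, h12]
  ring

lemma UG (p : ℕ) : Uf p - Uf (p+1) = ((p:ℝ)+1) * (Gf p - Gf (p+1)) := by
  have hstep : (Nat.doubleFactorial (2*(p+1)-1) : ℝ)
      = (2*p+1) * (Nat.doubleFactorial (2*p-1) : ℝ) := by
    rw [dfact_step]; push_cast; ring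
  have hfac : ((p+2).factorial : ℝ) = (p+2) * ((p+1).factorial : ℝ) := by
    rw [Nat.factorial_succ]; push_cast; ring
  have hf0 : ((p+1).factorial : ℝ) ≠ 0 := Nat.cast_ne_zero.mpr (p+1).factorial_ne_zero
  have h2 : (2:ℝ)^p ≠ 0 := by positivity
  have hp2 : ((p:ℝ)+2) ≠ 0 := by positivity
  unfold Uf Gf
  rw [show p+1+1 = p+2 from rfl, hstep, hfac]
  push_cast
  field_simp
  ring

lemma key2 (p : ℕ) :
    ((p:ℝ)+1) * Zfun (p+2) / 12^(p+1) = Real.sqrt 3 / 4 * (Uf p - Uf (p+1)) := by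
  rw [UG, mul_div_assoc, key1]
  ring

lemma Gf_nonneg (n : ℕ) : 0 ≤ Gf n := by unfold Gf; positivity

lemma Gf_le (n : ℕ) : Gf n ≤ 1/((n:ℝ)+1) := by
  unfold Gf
  rw [div_le_div_iff₀ (by positivity) (by positivity)]
  have h := dfact_le n
  have h1 : (Nat.doubleFactorial (2*n-1) : ℝ) ≤ 2^n * n.factorial := by
    exact_mod_cast h
  have hfac : ((n+1).factorial : ℝ) = (n+1) * (n.factorial : ℝ) := by
    rw [Nat.factorial_succ]; push_cast; ring
  rw [hfac]
  have hfp : (0:ℝ) < (n.factorial : ℝ) := by exact_mod_cast n.factorial_pos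
  have hn : (0:ℝ) ≤ (n:ℝ) := Nat.cast_nonneg n
  have h2p : (0:ℝ) < 2^n := by positivity
  nlinarith

lemma Gf_tendsto : Filter.Tendsto Gf Filter.atTop (nhds 0) := by
  apply squeeze_zero Gf_nonneg Gf_le
  exact tendsto_one_div_add_atTop_nhds_zero_nat

noncomputable def Df (n : ℕ) : ℝ :=
  (Nat.doubleFactorial (2*n-1) : ℝ) / (2^n * n.factorial)

lemma Df_nonneg (n : ℕ) : 0 ≤ Df n := by unfold Df; positivity

lemma Df_sq (n : ℕ) : Df n ^ 2 ≤ 1 / (2*(n:ℝ)+1) := by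
  induction n with
  | zero => unfold Df; norm_num [Nat.doubleFactorial]
  | succ k ih =>
    push_cast
    have hrec : Df (k+1) = Df k * ((2*(k:ℝ)+1) / (2*((k:ℝ)+1))) := by
      unfold Df
      have hstep : (Nat.doubleFactorial (2*(k+1)-1) : ℝ)
          = (2*k+1) * (Nat.doubleFactorial (2*k-1) : ℝ) := by
        rw [dfact_step]; push_cast; ring
      have hfac : ((k+1).factorial : ℝ) = (k+1) * (k.factorial : ℝ) := by
        rw [Nat.factorial_succ]; push_cast; ring
      have hf0 : (k.factorial : ℝ) ≠ 0 := Nat.cast_ne_zero.mpr k.factorial_ne_zero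
      have h2 : (2:ℝ)^k ≠ 0 := by positivity
      have hk1 : ((k:ℝ)+1) ≠ 0 := by positivity
      rw [hstep, hfac, pow_succ]
      field_simp
    rw [hrec, mul_pow]
    have hk : (0:ℝ) ≤ (k:ℝ) := Nat.cast_nonneg k
    have h1 : ((2*(k:ℝ)+1) / (2*((k:ℝ)+1)))^2 ≤ (2*(k:ℝ)+1)^2 / (2*((k:ℝ)+1))^2 := by
      rw [div_pow]
    calc Df k ^2 * ((2*(k:ℝ)+1) / (2*((k:ℝ)+1)))^2
        ≤ (1/(2*(k:ℝ)+1)) * ((2*(k:ℝ)+1)^2 / (2*((k:ℝ)+1))^2) := by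
          rw [div_pow]
          apply mul_le_mul ih le_rfl (by positivity) (by positivity)
      _ ≤ 1 / (2*((k:ℝ)+1)+1) := by
          rw [div_mul_div_comm, one_mul,
            div_le_div_iff₀ (by positivity) (by positivity)]
          nlinarith

lemma Df_tendsto : Filter.Tendsto Df Filter.atTop (nhds 0) := by
  have h1 : Filter.Tendsto (fun n : ℕ => Df n ^ 2) Filter.atTop (nhds 0) := by
    apply squeeze_zero (fun n => by positivity) Df_sq
    apply squeeze_zero (fun n => by positivity) (g := fun n : ℕ => 1/((n:ℝ)+1))
    · intro n
      apply div_le_div_of_nonneg_left (by norm_num) (by positivity)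
      push_cast; linarith [(Nat.cast_nonneg n : (0:ℝ) ≤ n)]
    · exact tendsto_one_div_add_atTop_nhds_zero_nat
  have h2 : Filter.Tendsto (fun n : ℕ => Real.sqrt (Df n ^ 2)) Filter.atTop (nhds 0) := by
    have := (Real.continuous_sqrt.tendsto 0).comp h1
    simpa [Function.comp_def] using this
  refine h2.congr fun n => ?_
  exact Real.sqrt_sq (Df_nonneg n)

lemma Uf_le_Df (n : ℕ) : Uf n ≤ Df n := by
  unfold Uf Df
  have hfac : ((n+1).factorial : ℝ) = (n+1) * (n.factorial : ℝ) := by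
    rw [Nat.factorial_succ]; push_cast; ring
  rw [hfac, div_le_div_iff₀ (by positivity) (by positivity)]
  have hd : (0:ℝ) ≤ (Nat.doubleFactorial (2*n-1) : ℝ) := Nat.cast_nonneg _
  have hf : (0:ℝ) < (n.factorial : ℝ) := by exact_mod_cast n.factorial_pos
  have h2 : (0:ℝ) < 2^n := by positivity
  have hn : (0:ℝ) ≤ (n:ℝ) := Nat.cast_nonneg n
  nlinarith [mul_le_mul_of_nonneg_right (mul_le_mul_of_nonneg_left
    (show (3*(n:ℝ)+2) ≤ 3*((n:ℝ)+1) by linarith) hd) (mul_pos h2 hf).le]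

lemma Uf_nonneg (n : ℕ) : 0 ≤ Uf n := by
  unfold Uf; positivity

lemma Uf_tendsto : Filter.Tendsto Uf Filter.atTop (nhds 0) :=
  squeeze_zero Uf_nonneg Uf_le_Df Df_tendsto

lemma sqrt3_le_two : Real.sqrt 3 ≤ 2 := by
  nlinarith [Real.sq_sqrt (by norm_num : (0:ℝ) ≤ 3), Real.sqrt_nonneg 3]

lemma Zfun_nonneg (p : ℕ) : 0 ≤ Zfun p := by
  unfold Zfun
  split
  · linarith [sqrt3_le_two]
  · positivity

lemma hG0 : Gf 0 = 1/3 := by unfold Gf; norm_num [Nat.doubleFactorial]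

lemma hU0 : Uf 0 = 2/3 := by unfold Uf; norm_num [Nat.doubleFactorial]

lemma hasSum1 : HasSum (fun p : ℕ => Zfun (p + 1) / 12 ^ p) ((3 - Real.sqrt 3) / 6) := by
  have hnn : ∀ p : ℕ, 0 ≤ Zfun (p + 1) / 12 ^ p := fun p => by
    have := Zfun_nonneg (p+1); positivity
  rw [hasSum_iff_tendsto_nat_of_nonneg hnn]
  have hform : ∀ n : ℕ, ∑ p ∈ Finset.range (n+1), Zfun (p+1) / 12^p
      = (2 - Real.sqrt 3)/4 + Real.sqrt 3/4 * (Gf 0 - Gf n) := by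
    intro n
    rw [Finset.sum_range_succ']
    have h1 : ∀ i ∈ Finset.range n, Zfun (i+1+1) / 12^(i+1)
        = Real.sqrt 3/4 * (Gf i - Gf (i+1)) := fun i _ => key1 i
    rw [Finset.sum_congr rfl h1, ← Finset.mul_sum, Finset.sum_range_sub' Gf n]
    norm_num [Zfun]
    ring
  have hlim : Filter.Tendsto
      (fun n : ℕ => (2 - Real.sqrt 3)/4 + Real.sqrt 3/4 * (Gf 0 - Gf n))
      Filter.atTop (nhds ((3 - Real.sqrt 3)/6)) := by
    have h := Filter.Tendsto.const_add ((2 - Real.sqrt 3)/4)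
      (Filter.Tendsto.const_mul (Real.sqrt 3/4) (Filter.Tendsto.const_sub (Gf 0) Gf_tendsto))
    have he : (3 - Real.sqrt 3)/6 = (2 - Real.sqrt 3)/4 + Real.sqrt 3/4 * (Gf 0 - 0) := by
      rw [hG0]; ring
    rw [he]; exact h
  exact (Filter.tendsto_add_atTop_iff_nat 1).mp (hlim.congr fun n => (hform n).symm)

lemma hasSum2 : HasSum (fun p : ℕ => (p:ℝ) * Zfun (p + 1) / 12 ^ p) (Real.sqrt 3 / 6) := by
  have hnn : ∀ p : ℕ, 0 ≤ (p:ℝ) * Zfun (p + 1) / 12 ^ p := fun p => by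
    have := Zfun_nonneg (p+1)
    have : (0:ℝ) ≤ (p:ℝ) * Zfun (p+1) := mul_nonneg (Nat.cast_nonneg p) this
    positivity
  rw [hasSum_iff_tendsto_nat_of_nonneg hnn]
  have hform : ∀ n : ℕ, ∑ p ∈ Finset.range (n+1), (p:ℝ) * Zfun (p+1) / 12^p
      = Real.sqrt 3/4 * (Uf 0 - Uf n) := by
    intro n
    rw [Finset.sum_range_succ']
    have h1 : ∀ i ∈ Finset.range n, ((i:ℕ)+1 : ℕ) * Zfun (i+1+1) / 12^(i+1)
        = Real.sqrt 3/4 * (Uf i - Uf (i+1)) := by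
      intro i _
      push_cast
      exact key2 i
    rw [Finset.sum_congr rfl (fun i hi => by push_cast; exact key2 i),
      ← Finset.mul_sum, Finset.sum_range_sub' Uf n]
    norm_num
  have hlim : Filter.Tendsto
      (fun n : ℕ => Real.sqrt 3/4 * (Uf 0 - Uf n))
      Filter.atTop (nhds (Real.sqrt 3/6)) := by
    have h := Filter.Tendsto.const_mul (Real.sqrt 3/4)
      (Filter.Tendsto.const_sub (Uf 0) Uf_tendsto)
    have he : Real.sqrt 3/6 = Real.sqrt 3/4 * (Uf 0 - 0) := by rw [hU0]; ring
    rw [he]; exact h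
  exact (Filter.tendsto_add_atTop_iff_nat 1).mp (hlim.congr fun n => (hform n).symm)

/-- `Σ_{p≥0} Z(p+1)·12^{-p} = (3-√3)/6` and `Σ_{p≥0} p·Z(p+1)·12^{-p} = √3/6`. -/
theorem Z_sums :
    Summable (fun p : ℕ => Zfun (p + 1) / 12 ^ p) ∧
    Summable (fun p : ℕ => (p : ℝ) * Zfun (p + 1) / 12 ^ p) ∧
    ∑' p : ℕ, Zfun (p + 1) / 12 ^ p = (3 - Real.sqrt 3) / 6 ∧
    ∑' p : ℕ, (p : ℝ) * Zfun (p + 1) / 12 ^ p = Real.sqrt 3 / 6 :=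
  ⟨hasSum1.summable, hasSum2.summable, hasSum1.tsum_eq, hasSum2.tsum_eq⟩
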